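/- Let φ(x) = 1/|x|^{2α-1} with α ∈ (1/2,1], and let u₁(x) = (G₁ * φ)(x) be the convolution with the Gaussian heat kernel G₁(x) = (4π)^{-3/2} e^{-|x|²/4} on ℝ³. Then sup_{x ∈ ℝ³} (1+|x|)^{2α-1} |u₁(x)| < ∞. -/

import Mathlib

open MeasureTheory Real

noncomputable section

abbrev E3 := EuclideanSpace ℝ (Fin 3)

lemma gauss_integrable {b : ℝ} (hb : 0 < b) :
    Integrable (fun v : E3 => rexp (-b * ‖v‖ ^ 2)) := by
  have h := (GaussianFourier.integrable_cexp_neg_mul_sq_norm_add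
      (b := (b : ℂ)) (by simpa using hb) 0 (0 : E3)).norm
  refine h.congr (Filter.Eventually.of_forall fun v => ?_)
  simp only [zero_mul, add_zero, Complex.norm_exp]
  congr 1
  have : (-(b : ℂ) * (‖v‖ : ℂ) ^ 2) = ((-b * ‖v‖ ^ 2 : ℝ) : ℂ) := by push_cast; ring
  rw [this, Complex.ofReal_re]

lemma coord_abs_le_norm (y : E3) (i : Fin 3) : |y i| ≤ ‖y‖ := by
  rw [EuclideanSpace.norm_eq]
  refine le_trans (le_of_eq (Real.sqrt_sq_eq_abs (y i)).symm) (Real.sqrt_le_sqrt ?_)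
  have h := Finset.single_le_sum (f := fun j => ‖y j‖ ^ 2)
    (fun j _ => by positivity) (Finset.mem_univ i)
  simpa [Real.norm_eq_abs, sq_abs] using h

lemma sing_integrable {β : ℝ} (hβ0 : 0 < β) (hβ1 : β ≤ 1) :
    Integrable (fun y : E3 => (Metric.ball (0 : E3) 1).indicator (fun y => ‖y‖ ^ (-β)) y) := by
  set c : ℝ := -(β / 3) with hc
  have hc1 : (-1 : ℝ) < c := by rw [hc]; linarith
  have hc0 : c < 0 := by rw [hc]; linarith
  -- 1D integrability of |t| ^ c on [-1, 1]
  have h01 : IntegrableOn (fun t : ℝ => t ^ c) (Set.Ioc (0 : ℝ) 1) := by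
    have := intervalIntegral.intervalIntegrable_rpow' (a := 0) (b := 1) (r := c) hc1
    rwa [intervalIntegrable_iff_integrableOn_Ioc_of_le zero_le_one] at this
  have hI01 : IntervalIntegrable (fun t : ℝ => |t| ^ c) volume 0 1 := by
    rw [intervalIntegrable_iff_integrableOn_Ioc_of_le zero_le_one]
    exact h01.congr_fun (fun t ht => by rw [abs_of_pos ht.1]) measurableSet_Ioc
  have hIneg : IntervalIntegrable (fun t : ℝ => |t| ^ c) volume (-1) 0 := by
    have := (IntervalIntegrable.iff_comp_neg (f := fun t : ℝ => |t| ^ c)).mp hI01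
    simp only [abs_neg, neg_zero] at this
    exact this.symm
  have hI : IntervalIntegrable (fun t : ℝ => |t| ^ c) volume (-1) 1 := hIneg.trans hI01
  have h1d : Integrable (fun t : ℝ => (Set.Icc (-1 : ℝ) 1).indicator (fun t => |t| ^ c) t) := by
    rw [integrable_indicator_iff measurableSet_Icc]
    rwa [intervalIntegrable_iff_integrableOn_Icc_of_le (by norm_num)] at hI
  set g : ℝ → ℝ := fun t => (Set.Icc (-1 : ℝ) 1).indicator (fun t => |t| ^ c) t with hg
  have hgnn : ∀ t, 0 ≤ g t := fun t =>
    Set.indicator_nonneg (fun s _ => Real.rpow_nonneg (abs_nonneg s) _) t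
  have hprod : Integrable (fun x : Fin 3 → ℝ => ∏ i, g (x i)) :=
    Integrable.fintype_prod (f := fun _ : Fin 3 => g) (fun _ => h1d)
  have e := EuclideanSpace.volume_preserving_symm_measurableEquiv_toLp (Fin 3)
  have hprodE : Integrable (fun y : E3 => ∏ i, g (y i)) := by
    rw [← e.integrable_comp_emb (MeasurableEquiv.measurableEmbedding _)] at hprod
    have : ((fun x : Fin 3 → ℝ => ∏ i, g (x i)) ∘ ((MeasurableEquiv.toLp 2 (Fin 3 → ℝ)).symm))
        = fun y : E3 => ∏ i, g (y i) := by
      funext y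
      simp [Function.comp]
    rwa [this] at hprod
  -- a.e. all coordinates are nonzero
  have hnull : ∀ i : Fin 3, volume {y : E3 | y i = 0} = 0 := by
    intro i
    have hker : {y : E3 | y i = 0}
        = (LinearMap.ker ((EuclideanSpace.proj i : E3 →L[ℝ] ℝ) : E3 →ₗ[ℝ] ℝ) : Set E3) := by
      ext y; simp [LinearMap.mem_ker]
    rw [hker]
    apply Measure.addHaar_submodule
    intro h
    have hmem : EuclideanSpace.single i (1 : ℝ) ∈
        LinearMap.ker ((EuclideanSpace.proj i : E3 →L[ℝ] ℝ) : E3 →ₗ[ℝ] ℝ) := h ▸ Submodule.mem_top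
    simp [LinearMap.mem_ker] at hmem
  have hae : ∀ᵐ y : E3, ∀ i, y i ≠ 0 := by
    rw [ae_iff]
    refine measure_mono_null (fun y hy => ?_) (measure_iUnion_null fun i => hnull i)
    push_neg at hy
    obtain ⟨i, hi⟩ := hy
    exact Set.mem_iUnion.2 ⟨i, hi⟩
  refine hprodE.mono' ?_ ?_
  · have hm : Measurable fun y : E3 => ‖y‖ ^ (-β) := by fun_prop
    exact (hm.indicator measurableSet_ball).aestronglyMeasurable
  · refine hae.mono fun y hy => ?_
    rw [Real.norm_eq_abs, abs_of_nonneg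
      (Set.indicator_nonneg (fun s _ => Real.rpow_nonneg (norm_nonneg s) _) y)]
    by_cases hy1 : y ∈ Metric.ball (0 : E3) 1
    · rw [Set.indicator_of_mem hy1]
      rw [Metric.mem_ball, dist_zero_right] at hy1
      have hy0 : 0 < ‖y‖ := by
        rw [norm_pos_iff]
        intro h
        exact hy 0 (by rw [h]; rfl)
      have h1 : ‖y‖ ^ (-β) = ∏ _i : Fin 3, ‖y‖ ^ c := by
        rw [Finset.prod_const, Finset.card_univ, Fintype.card_fin,
          ← Real.rpow_natCast (‖y‖ ^ c) 3, ← Real.rpow_mul (norm_nonneg y)]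
        norm_num [hc]
      rw [h1]
      refine Finset.prod_le_prod (fun i _ => Real.rpow_nonneg (norm_nonneg y) _)
        (fun i _ => ?_)
      have habs : |y i| ≤ ‖y‖ := coord_abs_le_norm y i
      have hmem : y i ∈ Set.Icc (-1 : ℝ) 1 := by
        have := habs.trans hy1.le
        exact abs_le.mp this
      rw [hg]
      simp only [Set.indicator_of_mem hmem]
      exact Real.rpow_le_rpow_of_nonpos (abs_pos.mpr (hy i)) habs hc0.le
    · rw [Set.indicator_of_notMem hy1]
      exact Finset.prod_nonneg fun i _ => hgnn _

lemma key_ineq {β K t r s : ℝ} (hβ0 : 0 < β) (hβ1 : β ≤ 1) (hK : 0 ≤ K)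
    (ht : 0 ≤ t) (hr : 0 ≤ r) (hs : 0 ≤ s) (hstr : s ≤ t + r) :
    (1 + s) ^ β * (K * rexp (-t ^ 2 / 4) * r ^ (-β)) ≤
      6 * K * (rexp (-t ^ 2 / 8) + (if r < 1 then r ^ (-β) else 0)) := by
  have hite : (0 : ℝ) ≤ (if r < 1 then r ^ (-β) else 0) := by
    split
    · exact Real.rpow_nonneg hr _
    · exact le_refl 0
  have hexp8 : (0:ℝ) < rexp (-t ^ 2 / 8) := Real.exp_pos _
  rcases eq_or_lt_of_le hr with hr0 | hr0
  · -- r = 0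
    rw [← hr0, Real.zero_rpow (by linarith : -β ≠ 0), if_pos (by norm_num : (0:ℝ) < 1)]
    simp only [mul_zero, add_zero]
    positivity
  · -- r > 0
    have h1s : (1 + s) ^ β ≤ (1 + t) ^ β * (1 + r) ^ β := by
      rw [← Real.mul_rpow (by positivity) (by positivity)]
      exact Real.rpow_le_rpow (by positivity) (by nlinarith) hβ0.le
    have h2 : (1 + t) ^ β ≤ 1 + t := by
      calc (1 + t) ^ β ≤ (1 + t) ^ (1:ℝ) :=
            Real.rpow_le_rpow_of_exponent_le (by linarith) hβ1
        _ = 1 + t := Real.rpow_one _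
    have h3 : (1 + t) * rexp (-t ^ 2 / 4) ≤ 3 * rexp (-t ^ 2 / 8) := by
      have he : rexp (-t ^ 2 / 4) = rexp (-t ^ 2 / 8) * rexp (-t ^ 2 / 8) := by
        rw [← Real.exp_add]; ring_nf
      have h4 := Real.add_one_le_exp (t ^ 2 / 8)
      have h5 : (1 + t) ≤ 3 * rexp (t ^ 2 / 8) := by
        nlinarith [sq_nonneg (t - 4/3)]
      have hEE : rexp (-t ^ 2 / 8) * rexp (t ^ 2 / 8) = 1 := by
        rw [← Real.exp_add, show -t ^ 2 / 8 + t ^ 2 / 8 = 0 by ring, Real.exp_zero]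
      have hb : (1 + t) * rexp (-t ^ 2 / 8) ≤ 3 := by
        nlinarith [mul_le_mul_of_nonneg_right h5 hexp8.le]
      calc (1 + t) * rexp (-t ^ 2 / 4)
          = ((1 + t) * rexp (-t ^ 2 / 8)) * rexp (-t ^ 2 / 8) := by rw [he]; ring
        _ ≤ 3 * rexp (-t ^ 2 / 8) := mul_le_mul_of_nonneg_right hb hexp8.le
    have hb1 : (1 + t) ^ β * rexp (-t ^ 2 / 4) ≤ 3 * rexp (-t ^ 2 / 8) := by
      calc (1 + t) ^ β * rexp (-t ^ 2 / 4) ≤ (1 + t) * rexp (-t ^ 2 / 4) :=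
            mul_le_mul_of_nonneg_right h2 (Real.exp_pos _).le
        _ ≤ 3 * rexp (-t ^ 2 / 8) := h3
    have hLHS : (1 + s) ^ β * (K * rexp (-t ^ 2 / 4) * r ^ (-β)) ≤
        K * ((1 + t) ^ β * rexp (-t ^ 2 / 4)) * ((1 + r) ^ β * r ^ (-β)) := by
      have h := mul_le_mul_of_nonneg_right h1s
        (by positivity : (0:ℝ) ≤ K * rexp (-t ^ 2 / 4) * r ^ (-β))
      calc (1 + s) ^ β * (K * rexp (-t ^ 2 / 4) * r ^ (-β))
          ≤ (1 + t) ^ β * (1 + r) ^ β * (K * rexp (-t ^ 2 / 4) * r ^ (-β)) := h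
        _ = K * ((1 + t) ^ β * rexp (-t ^ 2 / 4)) * ((1 + r) ^ β * r ^ (-β)) := by ring
    by_cases hr1 : r < 1
    · -- small r
      have hb2 : (1 + r) ^ β ≤ 2 := by
        calc (1 + r) ^ β ≤ (2:ℝ) ^ β :=
              Real.rpow_le_rpow (by positivity) (by linarith) hβ0.le
          _ ≤ (2:ℝ) ^ (1:ℝ) := Real.rpow_le_rpow_of_exponent_le one_le_two hβ1
          _ = 2 := Real.rpow_one 2
      have hexple : rexp (-t ^ 2 / 8) ≤ 1 := by
        rw [Real.exp_le_one_iff]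
        nlinarith
      have hrb : (0:ℝ) ≤ r ^ (-β) := Real.rpow_nonneg hr _
      have : K * ((1 + t) ^ β * rexp (-t ^ 2 / 4)) * ((1 + r) ^ β * r ^ (-β)) ≤
          K * (3 * rexp (-t ^ 2 / 8)) * (2 * r ^ (-β)) := by
        apply mul_le_mul
        · exact mul_le_mul_of_nonneg_left hb1 hK
        · exact mul_le_mul_of_nonneg_right hb2 hrb
        · positivity
        · positivity
      rw [if_pos hr1]
      calc (1 + s) ^ β * (K * rexp (-t ^ 2 / 4) * r ^ (-β))
          ≤ K * (3 * rexp (-t ^ 2 / 8)) * (2 * r ^ (-β)) := le_trans hLHS this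
        _ = 6 * K * (rexp (-t ^ 2 / 8) * r ^ (-β)) := by ring
        _ ≤ 6 * K * r ^ (-β) := by
            apply mul_le_mul_of_nonneg_left _ (by linarith)
            calc rexp (-t ^ 2 / 8) * r ^ (-β) ≤ 1 * r ^ (-β) :=
                  mul_le_mul_of_nonneg_right hexple hrb
              _ = r ^ (-β) := one_mul _
        _ ≤ 6 * K * (rexp (-t ^ 2 / 8) + r ^ (-β)) := by nlinarith
    · -- r ≥ 1
      have hr1' : (1:ℝ) ≤ r := le_of_not_gt hr1
      have hb2 : (1 + r) ^ β * r ^ (-β) ≤ 2 := by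
        rw [Real.rpow_neg hr, ← div_eq_mul_inv, ← Real.div_rpow (by linarith) hr]
        calc ((1 + r) / r) ^ β ≤ (2:ℝ) ^ β := by
              apply Real.rpow_le_rpow (by positivity) _ hβ0.le
              rw [div_le_iff₀ hr0]
              linarith
          _ ≤ (2:ℝ) ^ (1:ℝ) := Real.rpow_le_rpow_of_exponent_le one_le_two hβ1
          _ = 2 := Real.rpow_one 2
      have : K * ((1 + t) ^ β * rexp (-t ^ 2 / 4)) * ((1 + r) ^ β * r ^ (-β)) ≤
          K * (3 * rexp (-t ^ 2 / 8)) * 2 := by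
        apply mul_le_mul
        · exact mul_le_mul_of_nonneg_left hb1 hK
        · exact hb2
        · positivity
        · positivity
      rw [if_neg hr1]
      calc (1 + s) ^ β * (K * rexp (-t ^ 2 / 4) * r ^ (-β))
          ≤ K * (3 * rexp (-t ^ 2 / 8)) * 2 := le_trans hLHS this
        _ = 6 * K * rexp (-t ^ 2 / 8) := by ring
        _ ≤ 6 * K * (rexp (-t ^ 2 / 8) + 0) := by nlinarith

set_option maxHeartbeats 1000000 in
/-- Let `φ(x) = 1/|x|^{2α-1}` with `α ∈ (1/2, 1]`, and let `u₁ = G₁ * φ` be its convolution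
with the Gaussian heat kernel at time `1`. Then `sup_x (1+|x|)^{2α-1} |u₁(x)| < ∞`. -/
theorem heat_convolution_decay (α : ℝ) (hα : α ∈ Set.Ioc (1/2 : ℝ) 1)
    (u₁ : E3 → ℝ)
    (hu₁ : ∀ x : E3, u₁ x =
      ∫ y : E3, (4 * π) ^ (-(3 : ℝ) / 2) * Real.exp (-‖x - y‖ ^ 2 / 4) * ‖y‖ ^ (1 - 2 * α)) :
    ∃ C : ℝ, ∀ x : E3, (1 + ‖x‖) ^ (2 * α - 1) * |u₁ x| ≤ C := by
  obtain ⟨hα1, hα2⟩ := hα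
  have hβ0 : 0 < 2 * α - 1 := by linarith
  have hβ1 : 2 * α - 1 ≤ 1 := by linarith
  set K : ℝ := (4 * π) ^ (-(3 : ℝ) / 2) with hKdef
  have hK : 0 ≤ K := Real.rpow_nonneg (by positivity) _
  set ind : E3 → ℝ :=
    fun y => (Metric.ball (0 : E3) 1).indicator (fun y => ‖y‖ ^ (-(2 * α - 1))) y with hinddef
  have hind : Integrable ind := sing_integrable hβ0 hβ1
  have hgauss0 : Integrable (fun v : E3 => rexp (-‖v‖ ^ 2 / 8)) := by
    have h := gauss_integrable (b := 1/8) (by norm_num)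
    have heq : (fun v : E3 => rexp (-(1/8 : ℝ) * ‖v‖ ^ 2))
        = fun v : E3 => rexp (-‖v‖ ^ 2 / 8) := by
      funext v; congr 1; ring
    rwa [heq] at h
  refine ⟨6 * K * ((∫ v : E3, rexp (-‖v‖ ^ 2 / 8)) + ∫ y : E3, ind y), fun x => ?_⟩
  have hgauss : Integrable (fun y : E3 => rexp (-‖x - y‖ ^ 2 / 8)) :=
    hgauss0.comp_sub_left x
  have hG : Integrable (fun y : E3 => 6 * K * (rexp (-‖x - y‖ ^ 2 / 8) + ind y)) :=
    (hgauss.add hind).const_mul (6 * K)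
  have hnn : ∀ y : E3, 0 ≤ K * rexp (-‖x - y‖ ^ 2 / 4) * ‖y‖ ^ (1 - 2 * α) := by
    intro y
    have := Real.rpow_nonneg (norm_nonneg y) (1 - 2 * α)
    positivity
  rw [hu₁ x, abs_of_nonneg (integral_nonneg hnn)]
  have hstep1 : (1 + ‖x‖) ^ (2 * α - 1) *
      ∫ y : E3, K * rexp (-‖x - y‖ ^ 2 / 4) * ‖y‖ ^ (1 - 2 * α)
      = ∫ y : E3, (1 + ‖x‖) ^ (2 * α - 1) *
        (K * rexp (-‖x - y‖ ^ 2 / 4) * ‖y‖ ^ (1 - 2 * α)) :=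
    (integral_const_mul _ _).symm
  rw [hstep1]
  have hstep2 : (∫ y : E3, (1 + ‖x‖) ^ (2 * α - 1) *
        (K * rexp (-‖x - y‖ ^ 2 / 4) * ‖y‖ ^ (1 - 2 * α)))
      ≤ ∫ y : E3, 6 * K * (rexp (-‖x - y‖ ^ 2 / 8) + ind y) := by
    refine integral_mono_of_nonneg (Filter.Eventually.of_forall fun y => ?_) hG
      (Filter.Eventually.of_forall fun y => ?_)
    · have h1 : (0:ℝ) ≤ (1 + ‖x‖) ^ (2 * α - 1) :=
        Real.rpow_nonneg (by positivity) _
      exact mul_nonneg h1 (hnn y)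
    · dsimp only
      have hxy : ‖x‖ ≤ ‖x - y‖ + ‖y‖ := by
        have := norm_add_le (x - y) y
        rwa [sub_add_cancel] at this
      have hkey := key_ineq (K := K) hβ0 hβ1 hK (norm_nonneg (x - y)) (norm_nonneg y)
        (norm_nonneg x) hxy
      have hexpo : (1 : ℝ) - 2 * α = -(2 * α - 1) := by ring
      have hindy : ind y = if ‖y‖ < 1 then ‖y‖ ^ (-(2 * α - 1)) else 0 := by
        simp only [hinddef]
        by_cases hmem : y ∈ Metric.ball (0 : E3) 1
        · rw [Set.indicator_of_mem hmem,
            if_pos (by rwa [Metric.mem_ball, dist_zero_right] at hmem)]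
        · rw [Set.indicator_of_notMem hmem,
            if_neg (by rwa [Metric.mem_ball, dist_zero_right] at hmem)]
      rw [hexpo, hindy]
      exact hkey
  refine le_trans hstep2 (le_of_eq ?_)
  rw [integral_const_mul, integral_add hgauss hind]
  have htrans : (∫ y : E3, rexp (-‖x - y‖ ^ 2 / 8)) = ∫ v : E3, rexp (-‖v‖ ^ 2 / 8) :=
    integral_sub_left_eq_self (fun v : E3 => rexp (-‖v‖ ^ 2 / 8)) volume x
  rw [htrans]
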